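/- Let u ≠ v be two indices of a finite type V, and over ℂ let A = E_{uv} + E_{vu}, where E_{xy} denotes the V × V matrix with a 1 in position (x, y) and 0 elsewhere (A is the adjacency matrix of the single edge uv). Then for every t ∈ ℝ, the matrix exponential satisfies exp(−itA) = 1 + (cos t − 1)(E_{uu} + E_{vv}) − i (sin t)(E_{uv} + E_{vu}); that is, exp(−itA) acts as the rotation Rx(2t) = !![cos t, −i sin t; −i sin t, cos t] on the two-dimensional subspace spanned by the basis vectors indexed by u and v, and as the identity on its complement. -/

import Mathlib

open Matrix

section aux

variable {V : Type*} [Fintype V] [DecidableEq V]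

lemma aux_mul (u v : V) (huv : u ≠ v) :
    (Matrix.single u v (1 : ℂ) + Matrix.single v u (1 : ℂ)) *
      (Matrix.single u v (1 : ℂ) + Matrix.single v u (1 : ℂ)) =
    Matrix.single u u (1 : ℂ) + Matrix.single v v (1 : ℂ) := by
  rw [add_mul, mul_add, mul_add, Matrix.single_mul_single_of_ne 1 u v u huv.symm 1,
    Matrix.single_mul_single_of_ne 1 v u v huv 1, Matrix.single_mul_single_same,
    Matrix.single_mul_single_same]
  simp [add_comm]

lemma aux_mulP (u v : V) (huv : u ≠ v) :
    (Matrix.single u v (1 : ℂ) + Matrix.single v u (1 : ℂ)) *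
      (Matrix.single u u (1 : ℂ) + Matrix.single v v (1 : ℂ)) =
    Matrix.single u v (1 : ℂ) + Matrix.single v u (1 : ℂ) := by
  rw [add_mul, mul_add, mul_add, Matrix.single_mul_single_of_ne 1 u v u huv.symm 1,
    Matrix.single_mul_single_of_ne 1 v u v huv 1, Matrix.single_mul_single_same,
    Matrix.single_mul_single_same]
  simp [add_comm]

lemma aux_pow_odd (u v : V) (huv : u ≠ v) (k : ℕ) :
    (Matrix.single u v (1 : ℂ) + Matrix.single v u (1 : ℂ)) ^ (2 * k + 1) =
    Matrix.single u v (1 : ℂ) + Matrix.single v u (1 : ℂ) := by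
  induction k with
  | zero => simp
  | succ n ih =>
      have : 2 * (n + 1) + 1 = (2 * n + 1) + 2 := by ring
      rw [this, pow_add, ih, pow_two, aux_mul u v huv, aux_mulP u v huv]

lemma aux_pow_even (u v : V) (huv : u ≠ v) (k : ℕ) :
    (Matrix.single u v (1 : ℂ) + Matrix.single v u (1 : ℂ)) ^ (2 * (k + 1)) =
    Matrix.single u u (1 : ℂ) + Matrix.single v v (1 : ℂ) := by
  have : 2 * (k + 1) = (2 * k + 1) + 1 := by ring
  rw [this, pow_succ, aux_pow_odd u v huv, aux_mul u v huv]

end aux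

/-- Let `u ≠ v` be indices of a finite type `V` and, over `ℂ`, let
`A = E_{uv} + E_{vu}` (the adjacency matrix of the single edge `uv`, where `E_{xy}` is the
standard basis matrix with a `1` in position `(x, y)`). Then for every `t ∈ ℝ`,
`exp(−itA) = 1 + (cos t − 1)(E_{uu} + E_{vv}) − i (sin t)(E_{uv} + E_{vu})`;
that is, `exp(−itA)` acts as `Rx(2t)` on the span of the basis vectors indexed by `u` and `v`
and as the identity on its complement. -/
theorem stmt_9 {V : Type*} [Fintype V] [DecidableEq V] (u v : V) (huv : u ≠ v) (t : ℝ) :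
    NormedSpace.exp
        ((-(Complex.I * (t : ℂ))) •
          (Matrix.single u v (1 : ℂ) + Matrix.single v u (1 : ℂ))) =
      1 + ((Real.cos t : ℂ) - 1) •
            (Matrix.single u u (1 : ℂ) + Matrix.single v v (1 : ℂ))
        - (Complex.I * (Real.sin t : ℂ)) •
            (Matrix.single u v (1 : ℂ) + Matrix.single v u (1 : ℂ)) := by
  letI : NormedRing (Matrix V V ℂ) := Matrix.linftyOpNormedRing
  letI : NormedAlgebra ℂ (Matrix V V ℂ) := Matrix.linftyOpNormedAlgebra
  set A : Matrix V V ℂ :=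
    Matrix.single u v (1 : ℂ) + Matrix.single v u (1 : ℂ) with hA
  set P : Matrix V V ℂ :=
    Matrix.single u u (1 : ℂ) + Matrix.single v v (1 : ℂ) with hP
  set c : ℂ := -(Complex.I * (t : ℂ)) with hc
  have hcsq : c ^ 2 = -1 * (t : ℂ) ^ 2 := by
    rw [hc]
    ring_nf
    rw [Complex.I_sq]
    ring
  have hc2 : ∀ k : ℕ, c ^ (2 * k) = (-1) ^ k * (t : ℂ) ^ (2 * k) := by
    intro k
    rw [pow_mul, pow_mul, hcsq, mul_pow]
  -- the series for exp
  have key : HasSum (fun n : ℕ => ((Nat.factorial n : ℂ)⁻¹) • (c • A) ^ n)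
      (((Complex.cos t) • P + (1 - P)) + (Complex.sin t) • ((-Complex.I) • A)) := by
    apply HasSum.even_add_odd
    · -- even part
      have h1 : HasSum (fun k : ℕ => ((-1) ^ k * (t : ℂ) ^ (2 * k) / (Nat.factorial (2 * k) : ℂ)) • P)
          ((Complex.cos t) • P) := (Complex.hasSum_cos (t : ℂ)).smul_const P
      have h2 : HasSum (fun k : ℕ => if k = 0 then (1 - P : Matrix V V ℂ) else 0) (1 - P) :=
        hasSum_ite_eq 0 (1 - P)
      have := h1.add h2
      convert this using 1
      funext k
      cases k with
      | zero =>
          simp only [Nat.mul_zero, pow_zero, Nat.factorial_zero, Nat.cast_one, inv_one, one_smul,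
            if_pos rfl, pow_zero, mul_one, Nat.cast_one, one_mul, div_one, one_smul, if_true]
          module
      | succ n =>
          rw [smul_pow, aux_pow_even u v huv n, if_neg (Nat.succ_ne_zero n), add_zero,
            smul_smul, hc2]
          congr 1
          rw [div_eq_mul_inv]
          ring
    · -- odd part
      have h1 : HasSum (fun k : ℕ => ((-1) ^ k * (t : ℂ) ^ (2 * k + 1) / (Nat.factorial (2 * k + 1) : ℂ)) •
          ((-Complex.I) • A)) ((Complex.sin t) • ((-Complex.I) • A)) :=
        (Complex.hasSum_sin (t : ℂ)).smul_const _
      convert h1 using 1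
      funext k
      rw [smul_pow, aux_pow_odd u v huv, smul_smul, smul_smul]
      congr 1
      have hck : c ^ (2 * k + 1) = c ^ (2 * k) * c := by ring
      rw [hck, hc2, hc, div_eq_mul_inv]
      ring
  rw [NormedSpace.exp_eq_tsum ℂ]
  show (∑' n : ℕ, ((Nat.factorial n : ℂ)⁻¹) • (c • A) ^ n) = _
  rw [key.tsum_eq, Complex.ofReal_cos, Complex.ofReal_sin]
  module
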